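/- arXiv:1508.07642 — 2 statements merged into one kernel-verified Lean document; each statement's English description precedes it below -/
import Mathlib

section
/- Let (X,d) be a Polish metric space and let c(x,y) = φ(d(x,y)) where φ:[0,∞)→[0,∞) is convex with φ(0)=0, φ(x)>0 for x>0, and K := sup_{x>0} φ(2x)/φ(x) < ∞. Define p₀ = sup_{x>0} x φ'(x)/φ(x), where φ' is the right derivative of φ. Then 1 ≤ p₀ < ∞ (indeed p₀ ≤ K−1), and the function d̃(x,y) = c(x,y)^{1/p₀} is a distance on X which induces the same topology as d. -/
open MeasureTheory Filter Set
open scoped ENNReal Topology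

noncomputable section

/-- Right derivative of a real function. -/
noncomputable def rderiv (φ : ℝ → ℝ) (x : ℝ) : ℝ := derivWithin φ (Set.Ioi x) x

section Aux

variable {φ : ℝ → ℝ}

lemma aux_nonneg (hφ0 : φ 0 = 0) (hφpos : ∀ x > (0:ℝ), 0 < φ x) {t : ℝ} (ht : 0 ≤ t) :
    0 ≤ φ t := by
  rcases ht.eq_or_lt with rfl | h
  · simp [hφ0]
  · exact (hφpos t h).le

lemma aux_slope_mono (hconv : ConvexOn ℝ (Set.Ici 0) φ) (hφ0 : φ 0 = 0)
    {a b : ℝ} (ha : 0 < a) (hab : a ≤ b) : φ a / a ≤ φ b / b := by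
  have hb : 0 < b := lt_of_lt_of_le ha hab
  have := hconv.secant_mono (a := 0) (x := a) (y := b)
    (le_refl (0:ℝ)) ha.le hb.le ha.ne' hb.ne' hab
  simpa [hφ0] using this

lemma aux_mono (hconv : ConvexOn ℝ (Set.Ici 0) φ) (hφ0 : φ 0 = 0)
    (hφpos : ∀ x > (0:ℝ), 0 < φ x) {a b : ℝ} (ha : 0 ≤ a) (hab : a ≤ b) :
    φ a ≤ φ b := by
  rcases ha.eq_or_lt with rfl | ha'
  · rw [hφ0]; exact aux_nonneg hφ0 hφpos (le_trans ha hab)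
  · have hb : 0 < b := lt_of_lt_of_le ha' hab
    have h := aux_slope_mono hconv hφ0 ha' hab
    rw [div_le_div_iff₀ ha' hb] at h
    nlinarith [aux_nonneg hφ0 hφpos hb.le]

lemma aux_hasRD (hconv : ConvexOn ℝ (Set.Ici 0) φ) {x : ℝ} (hx : 0 < x) :
    HasDerivWithinAt φ (rderiv φ x) (Set.Ioi x) x := by
  have hmono : MonotoneOn (slope φ x) (Set.Ioi x) := by
    intro y hy z hz hyz
    have := hconv.secant_mono (a := x) (x := y) (y := z)
      hx.le (hx.trans hy).le (hx.trans hz).le (ne_of_gt hy) (ne_of_gt hz) hyz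
    simpa [slope_def_field] using this
  have hbdd : BddBelow (slope φ x '' Set.Ioi x) := by
    refine ⟨slope φ x 0, ?_⟩
    rintro r ⟨y, hy, rfl⟩
    have := hconv.secant_mono (a := x) (x := 0) (y := y)
      hx.le (le_refl (0:ℝ)) (hx.trans hy).le (ne_of_lt hx) (ne_of_gt hy) (hx.trans hy).le
    simpa [slope_def_field] using this
  have htend := hmono.tendsto_nhdsGT hbdd
  have H : HasDerivWithinAt φ (sInf (slope φ x '' Set.Ioi x)) (Set.Ioi x) x :=
    (hasDerivWithinAt_iff_tendsto_slope' (lt_irrefl x)).2 htend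
  rw [rderiv, H.derivWithin (uniqueDiffWithinAt_Ioi x)]
  exact H

lemma aux_slope_le_rderiv (hconv : ConvexOn ℝ (Set.Ici 0) φ) (hφ0 : φ 0 = 0)
    {x : ℝ} (hx : 0 < x) : φ x / x ≤ rderiv φ x := by
  have H := (hasDerivWithinAt_iff_tendsto_slope' (s := Set.Ioi x) (lt_irrefl x)).1 (aux_hasRD hconv hx)
  haveI : (𝓝[>] x).NeBot := nhdsGT_neBot x
  refine ge_of_tendsto H ?_
  filter_upwards [self_mem_nhdsWithin] with y (hy : x < y)
  have h := hconv.secant_mono (a := x) (x := 0) (y := y)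
    hx.le (le_refl (0:ℝ)) (hx.trans hy).le (ne_of_lt hx) (ne_of_gt hy) (hx.trans hy).le
  rw [slope_def_field]
  calc φ x / x = (φ 0 - φ x) / (0 - x) := by rw [hφ0, zero_sub, zero_sub, neg_div_neg_eq]
    _ ≤ (φ y - φ x) / (y - x) := h

lemma aux_rderiv_le_slope (hconv : ConvexOn ℝ (Set.Ici 0) φ)
    {x y : ℝ} (hx : 0 < x) (hxy : x < y) :
    rderiv φ x ≤ (φ y - φ x) / (y - x) := by
  have := hconv.rightDeriv_le_slope hx.le (hx.trans hxy).le hxy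
    (aux_hasRD hconv hx).differentiableWithinAt
  simpa [rderiv, slope_def_field] using this

/-- Core lemma: `φ x / x ^ p₀` is antitone. -/
lemma aux_core (hconv : ConvexOn ℝ (Set.Ici 0) φ) (hφ0 : φ 0 = 0)
    (hφpos : ∀ x > (0:ℝ), 0 < φ x) {p₀ : ℝ}
    (hub : ∀ x > (0:ℝ), x * rderiv φ x / φ x ≤ p₀)
    {a b : ℝ} (ha : 0 < a) (hab : a ≤ b) :
    φ b * a ^ p₀ ≤ φ a * b ^ p₀ := by
  have hb : 0 < b := lt_of_lt_of_le ha hab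
  set G : ℝ → ℝ := fun t => Real.log (φ t) - p₀ * Real.log t with hGdef
  have hsub : Set.Icc a b ⊆ Set.Ioi 0 := fun t ht => lt_of_lt_of_le ha ht.1
  have hφcont : ContinuousOn φ (Set.Icc a b) := by
    have h := hconv.continuousOn_interior
    rw [interior_Ici] at h
    exact h.mono hsub
  have hGcont : ContinuousOn G (Set.Icc a b) := by
    refine ContinuousOn.sub ?_ ?_
    · exact hφcont.log (fun t ht => (hφpos t (hsub ht)).ne')
    · exact continuousOn_const.mul
        (Real.continuousOn_log.mono (fun t ht => (ne_of_gt (hsub ht))))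
  have hGderiv : ∀ t ∈ Set.Ico a b,
      HasDerivWithinAt G ((φ t)⁻¹ * rderiv φ t - p₀ * t⁻¹) (Set.Ici t) t := by
    intro t ht
    have ht0 : 0 < t := lt_of_lt_of_le ha ht.1
    have h1 : HasDerivWithinAt (fun u => Real.log (φ u)) ((φ t)⁻¹ * rderiv φ t)
        (Set.Ioi t) t := by
      have := (Real.hasDerivAt_log (hφpos t ht0).ne').comp_hasDerivWithinAt t
        (aux_hasRD hconv ht0)
      simpa [Function.comp_def] using this
    have h2 : HasDerivWithinAt (fun u => p₀ * Real.log u) (p₀ * t⁻¹) (Set.Ioi t) t := by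
      have := ((Real.hasDerivAt_log ht0.ne').const_mul p₀).hasDerivWithinAt
        (s := Set.Ioi t)
      simpa using this
    exact (h1.sub h2).Ici_of_Ioi
  have hbound : ∀ t ∈ Set.Ico a b, (φ t)⁻¹ * rderiv φ t - p₀ * t⁻¹ ≤ 0 := by
    intro t ht
    have ht0 : 0 < t := lt_of_lt_of_le ha ht.1
    have hφt : 0 < φ t := hφpos t ht0
    have h := hub t ht0
    rw [div_le_iff₀ hφt] at h
    rw [sub_nonpos]
    have h2 : rderiv φ t ≤ p₀ * φ t / t := by
      rw [le_div_iff₀ ht0]; linarith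
    calc (φ t)⁻¹ * rderiv φ t ≤ (φ t)⁻¹ * (p₀ * φ t / t) :=
          mul_le_mul_of_nonneg_left h2 (inv_nonneg.2 hφt.le)
      _ = p₀ * t⁻¹ := by field_simp
  have hGba : G b ≤ G a :=
    image_le_of_deriv_right_le_deriv_boundary (B := fun _ => G a) (B' := fun _ => 0)
      hGcont hGderiv (le_refl (G a))
      continuousOn_const (fun t _ => hasDerivWithinAt_const t _ (G a)) hbound
      ⟨hab, le_rfl⟩
  have hlog : Real.log (φ b) + p₀ * Real.log a ≤ Real.log (φ a) + p₀ * Real.log b := by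
    have h1 : Real.log (φ b) - p₀ * Real.log b ≤ Real.log (φ a) - p₀ * Real.log a := hGba
    linarith
  have hL : Real.log (φ b * a ^ p₀) ≤ Real.log (φ a * b ^ p₀) := by
    rw [Real.log_mul (hφpos b hb).ne' (Real.rpow_pos_of_pos ha p₀).ne',
        Real.log_mul (hφpos a ha).ne' (Real.rpow_pos_of_pos hb p₀).ne',
        Real.log_rpow ha, Real.log_rpow hb]
    linarith
  exact (Real.log_le_log_iff
    (mul_pos (hφpos b hb) (Real.rpow_pos_of_pos ha p₀))
    (mul_pos (hφpos a ha) (Real.rpow_pos_of_pos hb p₀))).1 hL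

lemma aux_subadd (hconv : ConvexOn ℝ (Set.Ici 0) φ) (hφ0 : φ 0 = 0)
    (hφpos : ∀ x > (0:ℝ), 0 < φ x) {p₀ : ℝ} (hp1 : 1 ≤ p₀)
    (hub : ∀ x > (0:ℝ), x * rderiv φ x / φ x ≤ p₀)
    {s t : ℝ} (hs : 0 ≤ s) (ht : 0 ≤ t) :
    φ (s + t) ^ (1 / p₀ : ℝ) ≤ φ s ^ (1 / p₀ : ℝ) + φ t ^ (1 / p₀ : ℝ) := by
  have hp : 0 < p₀ := lt_of_lt_of_le one_pos hp1
  have hip : 0 < 1 / p₀ := by positivity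
  rcases hs.eq_or_lt with rfl | hs'
  · simp [hφ0, one_div, Real.zero_rpow (inv_ne_zero hp.ne')]
  rcases ht.eq_or_lt with rfl | ht'
  · simp [hφ0, one_div, Real.zero_rpow (inv_ne_zero hp.ne')]
  have hb : 0 < s + t := by linarith
  have key : ∀ u : ℝ, 0 < u → u ≤ s + t →
      φ (s + t) ^ (1 / p₀ : ℝ) * u ≤ φ u ^ (1 / p₀ : ℝ) * (s + t) := by
    intro u hu hust
    have h := aux_core hconv hφ0 hφpos hub hu hust
    have hφb := aux_nonneg hφ0 hφpos hb.le
    have hφu := aux_nonneg hφ0 hφpos hu.le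
    have h2 : (φ (s + t) * u ^ p₀) ^ (1 / p₀ : ℝ) ≤ (φ u * (s + t) ^ p₀) ^ (1 / p₀ : ℝ) :=
      Real.rpow_le_rpow (by positivity) h hip.le
    rw [Real.mul_rpow hφb (Real.rpow_pos_of_pos hu p₀).le,
        Real.mul_rpow hφu (Real.rpow_pos_of_pos hb p₀).le] at h2
    rw [show ((u : ℝ) ^ (p₀ : ℝ)) ^ (1 / p₀ : ℝ) = u by
          rw [← Real.rpow_mul hu.le, mul_one_div_cancel hp.ne', Real.rpow_one]] at h2
    rw [show (((s + t) : ℝ) ^ (p₀ : ℝ)) ^ (1 / p₀ : ℝ) = s + t by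
          rw [← Real.rpow_mul hb.le, mul_one_div_cancel hp.ne', Real.rpow_one]] at h2
    exact h2
  have h1 := key s hs' (by linarith)
  have h2 := key t ht' (by linarith)
  have h3 : φ (s + t) ^ (1 / p₀ : ℝ) * (s + t) ≤
      (φ s ^ (1 / p₀ : ℝ) + φ t ^ (1 / p₀ : ℝ)) * (s + t) := by nlinarith [h1, h2]
  exact le_of_mul_le_mul_right h3 hb

end Aux

theorem stmt2 {X : Type*} [MetricSpace X] [TopologicalSpace.SeparableSpace X] [CompleteSpace X]
    (φ : ℝ → ℝ) (hconv : ConvexOn ℝ (Set.Ici 0) φ) (hφ0 : φ 0 = 0)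
    (hφpos : ∀ x > (0:ℝ), 0 < φ x)
    (K : ℝ) (hK : IsLUB {k : ℝ | ∃ x > (0:ℝ), k = φ (2 * x) / φ x} K)
    (c : X → X → ℝ) (hc : ∀ x y, c x y = φ (dist x y))
    (p₀ : ℝ) (hp₀ : IsLUB {p : ℝ | ∃ x > (0:ℝ), p = x * rderiv φ x / φ x} p₀) :
    1 ≤ p₀ ∧ p₀ ≤ K - 1 ∧
    (∀ x y : X, (c x y) ^ (1 / p₀ : ℝ) = 0 ↔ x = y) ∧
    (∀ x y : X, (c x y) ^ (1 / p₀ : ℝ) = (c y x) ^ (1 / p₀ : ℝ)) ∧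
    (∀ x y z : X,
      (c x z) ^ (1 / p₀ : ℝ) ≤ (c x y) ^ (1 / p₀ : ℝ) + (c y z) ^ (1 / p₀ : ℝ)) ∧
    (∀ (u : ℕ → X) (x : X),
      Tendsto u atTop (nhds x) ↔
        Tendsto (fun n => (c (u n) x) ^ (1 / p₀ : ℝ)) atTop (nhds 0)) := by
  have hφ1 : 0 < φ 1 := hφpos 1 one_pos
  have hub : ∀ x > (0:ℝ), x * rderiv φ x / φ x ≤ p₀ := fun x hx => hp₀.1 ⟨x, hx, rfl⟩
  have hp1 : 1 ≤ p₀ := by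
    have h1 : (1:ℝ) ≤ 1 * rderiv φ 1 / φ 1 := by
      have h := aux_slope_le_rderiv hconv hφ0 one_pos
      rw [div_one] at h
      rw [one_mul, le_div_iff₀ hφ1]
      linarith
    exact le_trans h1 (hp₀.1 ⟨1, one_pos, rfl⟩)
  have hp : 0 < p₀ := lt_of_lt_of_le one_pos hp1
  have hip : 0 < (1/p₀ : ℝ) := by positivity
  have hK1 : p₀ ≤ K - 1 := by
    apply hp₀.2
    rintro p ⟨x, hx, rfl⟩
    have hφx := hφpos x hx
    have hs := aux_rderiv_le_slope hconv hx (by linarith : x < 2*x)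
    have h2 : rderiv φ x ≤ (φ (2*x) - φ x)/x := by
      have hxx : (2*x - x) = x := by ring
      rwa [hxx] at hs
    have hKx : φ (2*x)/φ x ≤ K := hK.1 ⟨x, hx, rfl⟩
    have h3 : x * rderiv φ x ≤ φ (2*x) - φ x := by
      rw [le_div_iff₀ hx] at h2
      linarith
    have h4 : x * rderiv φ x / φ x ≤ (φ (2*x) - φ x)/φ x :=
      (div_le_div_iff_of_pos_right hφx).2 h3
    rw [sub_div, div_self hφx.ne'] at h4
    linarith
  refine ⟨hp1, hK1, ?_, ?_, ?_, ?_⟩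
  · intro x y
    constructor
    · intro h
      by_contra hne
      have hd : 0 < dist x y := dist_pos.2 hne
      have hpos : 0 < (c x y) ^ (1/p₀ : ℝ) := by
        rw [hc]; exact Real.rpow_pos_of_pos (hφpos _ hd) _
      exact absurd h hpos.ne'
    · rintro rfl
      rw [hc, dist_self, hφ0, Real.zero_rpow hip.ne']
  · intro x y
    rw [hc, hc, dist_comm]
  · intro x y z
    rw [hc, hc, hc]
    have h1 : φ (dist x z) ≤ φ (dist x y + dist y z) :=
      aux_mono hconv hφ0 hφpos dist_nonneg (dist_triangle x y z)
    calc φ (dist x z) ^ (1/p₀:ℝ) ≤ φ (dist x y + dist y z) ^ (1/p₀:ℝ) :=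
          Real.rpow_le_rpow (aux_nonneg hφ0 hφpos dist_nonneg) h1 hip.le
      _ ≤ _ := aux_subadd hconv hφ0 hφpos hp1 hub dist_nonneg dist_nonneg
  · intro u x
    simp only [hc]
    constructor
    · intro h
      have hd : Tendsto (fun n => dist (u n) x) atTop (𝓝 0) :=
        tendsto_iff_dist_tendsto_zero.mp h
      have hφd : Tendsto (fun n => φ (dist (u n) x)) atTop (𝓝 0) := by
        refine squeeze_zero' (g := fun n => φ 1 * dist (u n) x)
          (Eventually.of_forall fun n => aux_nonneg hφ0 hφpos dist_nonneg) ?_ ?_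
        · filter_upwards [hd.eventually (eventually_le_nhds one_pos)] with n hn
          rcases (dist_nonneg : 0 ≤ dist (u n) x).eq_or_lt with heq | hlt
          · simp [← heq, hφ0]
          · have hsl := aux_slope_mono hconv hφ0 hlt hn
            rw [div_one] at hsl
            rw [div_le_iff₀ hlt] at hsl
            linarith
        · have := hd.const_mul (φ 1)
          simpa using this
      have hcont : ContinuousAt (fun y : ℝ => y ^ (1/p₀ : ℝ)) 0 :=
        Real.continuousAt_rpow_const 0 _ (Or.inr hip.le)
      have := hcont.tendsto.comp hφd
      simpa [Function.comp_def, one_div, Real.zero_rpow (inv_ne_zero hp.ne')] using this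
    · intro h
      rw [tendsto_iff_dist_tendsto_zero, Metric.tendsto_atTop]
      intro ε hε
      have hbd : 0 < φ ε ^ (1/p₀ : ℝ) := Real.rpow_pos_of_pos (hφpos ε hε) _
      obtain ⟨N, hN⟩ := eventually_atTop.1 (h.eventually (eventually_lt_nhds hbd))
      refine ⟨N, fun n hn => ?_⟩
      have hd : dist (u n) x < ε := by
        by_contra hcon
        push_neg at hcon
        have h1 : φ ε ≤ φ (dist (u n) x) := aux_mono hconv hφ0 hφpos hε.le hcon
        have h2 : φ ε ^ (1/p₀:ℝ) ≤ φ (dist (u n) x) ^ (1/p₀:ℝ) :=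
          Real.rpow_le_rpow (hφpos ε hε).le h1 hip.le
        exact absurd (hN n hn) (not_lt.2 h2)
      rw [Real.dist_eq, sub_zero, abs_of_nonneg dist_nonneg]
      exact hd

end
end

section
/- Let (X,d) be a Polish metric space, μ a Borel probability measure, and ν̲ a probability measure absolutely continuous with respect to μ with H(ν̲|μ) < ∞. Let f:X→ℝ be a bounded continuous function with ∫ f dν̲ = 0, and for ε small define ν_ε = (1 + ε f) ν̲ and h(ε) = H(ν_ε|μ). Then h is differentiable at 0 with h'(0) = ∫ log(dν̲/dμ) f dν̲. -/
open MeasureTheory Filter Set Metric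
open scoped ENNReal NNReal Topology

noncomputable section

open Classical in
/-- Relative entropy `H(ν|μ)`. -/
noncomputable def relEnt {X : Type*} [MeasurableSpace X] (ν μ : Measure X) : ℝ≥0∞ :=
  if ν ≪ μ ∧ Integrable (llr ν μ) ν then ENNReal.ofReal (∫ x, llr ν μ x ∂ν) else ∞

lemma my_integral_llr_nonneg {X : Type*} [MeasurableSpace X] (μ ν : Measure X)
    [IsProbabilityMeasure μ] [IsProbabilityMeasure ν] (hac : ν ≪ μ)
    (h : Integrable (llr ν μ) ν) : 0 ≤ ∫ x, llr ν μ x ∂ν := by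
  set g : X → ℝ := fun x => ((ν.rnDeriv μ x).toReal)⁻¹ with hg
  have hg_meas : Measurable g := (Measure.measurable_rnDeriv ν μ).ennreal_toReal.inv
  have hg_nn : 0 ≤ᵐ[ν] g := ae_of_all _ fun x => inv_nonneg.2 ENNReal.toReal_nonneg
  have hlint : ∫⁻ x, ENNReal.ofReal (g x) ∂ν ≤ 1 := by
    conv_lhs => rw [← Measure.withDensity_rnDeriv_eq ν μ hac]
    rw [lintegral_withDensity_eq_lintegral_mul _ (Measure.measurable_rnDeriv ν μ)
      (hg_meas.ennreal_ofReal)]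
    calc ∫⁻ x, ν.rnDeriv μ x * ENNReal.ofReal (g x) ∂μ ≤ ∫⁻ _, 1 ∂μ := by
          refine lintegral_mono fun x => ?_
          rcases eq_or_ne (ν.rnDeriv μ x) ∞ with hx | hx
          · simp [hg, hx]
          rcases eq_or_ne (ν.rnDeriv μ x) 0 with hx0 | hx0
          · simp [hg, hx0]
          · have ht : (ν.rnDeriv μ x).toReal ≠ 0 := ENNReal.toReal_ne_zero.2 ⟨hx0, hx⟩
            rw [hg]
            simp only []
            rw [ENNReal.ofReal_inv_of_pos (lt_of_le_of_ne ENNReal.toReal_nonneg (Ne.symm ht)),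
              ENNReal.ofReal_toReal hx, ENNReal.mul_inv_cancel hx0 hx]
      _ = 1 := by simp
  have hg_int : Integrable g ν := by
    refine ⟨hg_meas.aestronglyMeasurable, ?_⟩
    rw [hasFiniteIntegral_iff_ofReal hg_nn]
    exact lt_of_le_of_lt hlint ENNReal.one_lt_top
  have hgi_le : ∫ x, g x ∂ν ≤ 1 := by
    rw [integral_eq_lintegral_of_nonneg_ae hg_nn hg_meas.aestronglyMeasurable]
    calc (∫⁻ x, ENNReal.ofReal (g x) ∂ν).toReal ≤ (1 : ℝ≥0∞).toReal :=
          ENNReal.toReal_mono ENNReal.one_ne_top hlint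
      _ = 1 := by simp
  have hkey : ∀ᵐ x ∂ν, 1 - g x ≤ llr ν μ x := by
    filter_upwards [Measure.rnDeriv_pos hac, hac.ae_le (Measure.rnDeriv_lt_top ν μ)]
      with x h1 h2
    have ht : 0 < (ν.rnDeriv μ x).toReal := ENNReal.toReal_pos h1.ne' h2.ne
    have := Real.log_le_sub_one_of_pos (inv_pos.2 ht)
    rw [Real.log_inv] at this
    simp only [llr, hg]
    linarith
  have h1 : ∫ x, (1 - g x) ∂ν ≤ ∫ x, llr ν μ x ∂ν :=
    integral_mono_ae ((integrable_const 1).sub hg_int) h hkey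
  have h2 : ∫ x, (1 - g x) ∂ν = 1 - ∫ x, g x ∂ν := by
    rw [integral_sub (integrable_const 1) hg_int]
    simp
  linarith

lemma aux_deriv {X : Type*} [MeasurableSpace X] (ν : Measure X) [IsProbabilityMeasure ν]
    (f : X → ℝ) (hfm : Measurable f)
    (M' : ℝ) (hM'pos : 0 < M') (hM : ∀ x, |f x| ≤ M')
    (hf0 : ∫ x, f x ∂ν = 0) :
    HasDerivAt (fun ε : ℝ => ∫ x, (1 + ε * f x) * Real.log (1 + ε * f x) ∂ν) 0 0 := by
  set δ : ℝ := (2 * M')⁻¹ with hδ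
  have hδpos : 0 < δ := by positivity
  have hb : ∀ ε : ℝ, |ε| < δ → ∀ x, |ε * f x| ≤ 1/2 := by
    intro ε hε x
    rw [abs_mul]
    calc |ε| * |f x| ≤ δ * M' := by
          apply mul_le_mul hε.le (hM x) (abs_nonneg _) hδpos.le
      _ = 1/2 := by rw [hδ]; field_simp
  set F : ℝ → X → ℝ := fun ε x => (1 + ε * f x) * Real.log (1 + ε * f x) with hF
  set F' : ℝ → X → ℝ := fun ε x => (Real.log (1 + ε * f x) + 1) * f x with hF'
  have hmeas : ∀ ε : ℝ, AEStronglyMeasurable (F ε) ν := fun ε =>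
    ((measurable_const.add (hfm.const_mul ε)).mul
      (Real.measurable_log.comp (measurable_const.add (hfm.const_mul ε)))).aestronglyMeasurable
  have hF_int : Integrable (F 0) ν := by
    have : F 0 = fun _ => 0 := by funext x; simp [hF]
    rw [this]; exact integrable_const 0
  have hF'_meas : AEStronglyMeasurable (F' 0) ν :=
    (((Real.measurable_log.comp (measurable_const.add (hfm.const_mul 0))).add
      measurable_const).mul hfm).aestronglyMeasurable
  have h_bound : ∀ᵐ x ∂ν, ∀ ε ∈ ball (0:ℝ) δ, ‖F' ε x‖ ≤ (Real.log 2 + 1) * M' := by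
    refine ae_of_all _ fun x ε hε => ?_
    have hε' : |ε| < δ := by simpa [Real.dist_eq] using hε
    have h1 := abs_le.1 (hb ε hε' x)
    have hpos : (0:ℝ) < 1 + ε * f x := by linarith
    have hlog : |Real.log (1 + ε * f x)| ≤ Real.log 2 := by
      rw [abs_le]
      refine ⟨?_, Real.log_le_log hpos (by linarith)⟩
      rw [← Real.log_inv]
      exact Real.log_le_log (by norm_num) (by linarith)
    rw [hF', norm_mul]
    have h2 : ‖Real.log (1 + ε * f x) + 1‖ ≤ Real.log 2 + 1 := by
      refine (norm_add_le _ _).trans ?_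
      simp only [Real.norm_eq_abs, abs_one]
      linarith
    exact mul_le_mul h2 (hM x) (norm_nonneg _) (by positivity)
  have h_diff : ∀ᵐ x ∂ν, ∀ ε ∈ ball (0:ℝ) δ, HasDerivAt (F · x) (F' ε x) ε := by
    refine ae_of_all _ fun x ε hε => ?_
    have hε' : |ε| < δ := by simpa [Real.dist_eq] using hε
    have h1 := abs_le.1 (hb ε hε' x)
    have hpos : (0:ℝ) < 1 + ε * f x := by linarith
    have hu : HasDerivAt (fun ε : ℝ => 1 + ε * f x) (f x) ε := by
      simpa using (hasDerivAt_mul_const (f x)).const_add 1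
    exact (Real.hasDerivAt_mul_log hpos.ne').comp ε hu
  have := hasDerivAt_integral_of_dominated_loc_of_deriv_le (Metric.ball_mem_nhds 0 hδpos)
    (Eventually.of_forall hmeas) hF_int hF'_meas h_bound
    (integrable_const _) h_diff
  have h0 : ∫ x, F' 0 x ∂ν = 0 := by
    rw [hF']
    simp only [zero_mul, add_zero, Real.log_one, zero_add, one_mul]
    exact hf0
  rw [h0] at this
  exact this.2

lemma aux_key {X : Type*} [MeasurableSpace X] (μ ν : Measure X)
    [IsProbabilityMeasure μ] [IsProbabilityMeasure ν]
    (hac : ν ≪ μ) (hllr_int : Integrable (llr ν μ) ν)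
    (f : X → ℝ) (hfm : Measurable f) (hf_int : Integrable f ν) (hf0 : ∫ x, f x ∂ν = 0)
    (M' : ℝ) (hM' : ∀ x, |f x| ≤ M')
    (ε : ℝ) (hb : ∀ x, |ε * f x| ≤ 1/2) :
    (relEnt (ν.withDensity fun x => ENNReal.ofReal (1 + ε * f x)) μ).toReal
      = (∫ x, (1 + ε * f x) * Real.log (1 + ε * f x) ∂ν)
        + ((∫ x, llr ν μ x ∂ν) + ε * ∫ x, llr ν μ x * f x ∂ν) := by
  classical
  have hpos : ∀ x, (0:ℝ) < 1 + ε * f x := fun x => by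
    have := abs_le.1 (hb x); linarith [this.1]
  have hub : ∀ x, 1 + ε * f x ≤ 3/2 := fun x => by
    have := abs_le.1 (hb x); linarith [this.2]
  set w : X → ℝ≥0∞ := fun x => ENNReal.ofReal (1 + ε * f x) with hw
  have hwm : Measurable w := (measurable_const.add (hfm.const_mul ε)).ennreal_ofReal
  set ρ := ν.withDensity w with hρ
  have hρν : ρ ≪ ν := withDensity_absolutelyContinuous _ _
  have hρμ : ρ ≪ μ := hρν.trans hac
  have hlin_int : Integrable (fun x => 1 + ε * f x) ν :=
    (integrable_const 1).add (hf_int.const_mul ε)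
  have hint1 : ∫ x, (1 + ε * f x) ∂ν = 1 := by
    rw [integral_add (integrable_const 1) (hf_int.const_mul ε), integral_const_mul, hf0]
    simp
  haveI hprob : IsProbabilityMeasure ρ := by
    constructor
    rw [hρ, withDensity_apply _ MeasurableSet.univ, setLIntegral_univ,
      ← ofReal_integral_eq_lintegral_ofReal hlin_int (ae_of_all _ fun x => (hpos x).le),
      hint1, ENNReal.ofReal_one]
  have hrnD : ρ.rnDeriv μ =ᵐ[μ] fun x => w x * ν.rnDeriv μ x :=
    Measure.rnDeriv_withDensity_left hwm.aemeasurable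
      (ae_of_all _ fun x => ENNReal.ofReal_ne_top)
  have hllr_eq : llr ρ μ =ᵐ[ν] fun x => Real.log (1 + ε * f x) + llr ν μ x := by
    filter_upwards [hac.ae_le hrnD, Measure.rnDeriv_pos hac,
      hac.ae_le (Measure.rnDeriv_lt_top ν μ)] with x h1 h2 h3
    have ht : 0 < (ν.rnDeriv μ x).toReal := ENNReal.toReal_pos h2.ne' h3.ne
    show Real.log ((ρ.rnDeriv μ x).toReal) = _
    rw [h1, ENNReal.toReal_mul, hw]
    simp only []
    rw [ENNReal.toReal_ofReal (hpos x).le, Real.log_mul (hpos x).ne' ht.ne']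
    rfl
  have hφ_meas : AEStronglyMeasurable (fun x => (1 + ε * f x) * Real.log (1 + ε * f x)) ν :=
    ((measurable_const.add (hfm.const_mul ε)).mul
      (Real.measurable_log.comp (measurable_const.add (hfm.const_mul ε)))).aestronglyMeasurable
  have hφ_int : Integrable (fun x => (1 + ε * f x) * Real.log (1 + ε * f x)) ν := by
    refine (integrable_const (2:ℝ)).mono' hφ_meas (ae_of_all _ fun x => ?_)
    have h1 := abs_le.1 (hb x)
    have hlog : |Real.log (1 + ε * f x)| ≤ Real.log 2 := by
      rw [abs_le]
      refine ⟨?_, Real.log_le_log (hpos x) (by linarith [h1.2])⟩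
      rw [← Real.log_inv]
      exact Real.log_le_log (by norm_num) (by linarith [h1.1])
    have hlog2 : Real.log 2 ≤ 1 := by
      have := Real.log_le_sub_one_of_pos (by norm_num : (0:ℝ) < 2); linarith
    rw [Real.norm_eq_abs, abs_mul]
    calc |1 + ε * f x| * |Real.log (1 + ε * f x)| ≤ (3/2) * 1 := by
          apply mul_le_mul _ (hlog.trans hlog2) (abs_nonneg _) (by norm_num)
          rw [abs_of_pos (hpos x)]; exact hub x
      _ ≤ 2 := by norm_num
  have hfl_int : Integrable (fun x => f x * llr ν μ x) ν :=
    Integrable.bdd_mul hllr_int hfm.aestronglyMeasurable (ae_of_all _ fun x => by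
      simpa using hM' x)
  have hsum_int : Integrable (fun x => (1 + ε * f x) * (Real.log (1 + ε * f x) + llr ν μ x)) ν := by
    have hre : (fun x => (1 + ε * f x) * (Real.log (1 + ε * f x) + llr ν μ x))
        = fun x => (1 + ε * f x) * Real.log (1 + ε * f x)
          + (llr ν μ x + ε * (f x * llr ν μ x)) := by
      funext x; ring
    rw [hre]
    exact hφ_int.add (hllr_int.add (hfl_int.const_mul ε))
  set wnn : X → ℝ≥0 := fun x => (1 + ε * f x).toNNReal with hwnn
  have hwnnm : Measurable wnn := (measurable_const.add (hfm.const_mul ε)).real_toNNReal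
  have hρ' : ρ = ν.withDensity (fun x => ((wnn x : ℝ≥0∞))) := rfl
  have hcoe : ∀ x (r : ℝ), wnn x • r = (1 + ε * f x) * r := by
    intro x r
    rw [NNReal.smul_def, smul_eq_mul, hwnn]
    simp only []
    rw [Real.coe_toNNReal _ (hpos x).le]
  have hintρ : Integrable (fun x => Real.log (1 + ε * f x) + llr ν μ x) ρ := by
    rw [hρ', integrable_withDensity_iff_integrable_smul hwnnm]
    refine hsum_int.congr (ae_of_all _ fun x => ?_)
    simp only [hcoe]
  have hInt_llr_ρ : Integrable (llr ρ μ) ρ :=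
    (integrable_congr (hρν.ae_le hllr_eq)).2 hintρ
  have hval : ∫ x, llr ρ μ x ∂ρ
      = (∫ x, (1 + ε * f x) * Real.log (1 + ε * f x) ∂ν)
        + ((∫ x, llr ν μ x ∂ν) + ε * ∫ x, llr ν μ x * f x ∂ν) := by
    rw [integral_congr_ae (hρν.ae_le hllr_eq), hρ',
      integral_withDensity_eq_integral_smul hwnnm]
    have hre : (fun x => wnn x • (Real.log (1 + ε * f x) + llr ν μ x))
        = fun x => (1 + ε * f x) * Real.log (1 + ε * f x)
          + (llr ν μ x + ε * (f x * llr ν μ x)) := by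
      funext x; rw [hcoe]; ring
    have hI3 : Integrable (fun x => ε * (f x * llr ν μ x)) ν := by
      exact hfl_int.const_mul ε
    have hI2 : Integrable (fun x => llr ν μ x + ε * (f x * llr ν μ x)) ν := by
      exact hllr_int.add hI3
    rw [hre]
    rw [integral_add hφ_int hI2]
    rw [integral_add hllr_int hI3]
    have hml : ∫ x, ε * (f x * llr ν μ x) ∂ν = ε * ∫ x, f x * llr ν μ x ∂ν :=
      integral_const_mul ε _
    rw [hml]
    have hmc : ∫ x, f x * llr ν μ x ∂ν = ∫ x, llr ν μ x * f x ∂ν :=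
      integral_congr_ae (ae_of_all _ fun x => mul_comm _ _)
    rw [hmc]
  have hnn : 0 ≤ ∫ x, llr ρ μ x ∂ρ := my_integral_llr_nonneg μ ρ hρμ hInt_llr_ρ
  show (relEnt ρ μ).toReal = _
  rw [relEnt, if_pos ⟨hρμ, hInt_llr_ρ⟩, ENNReal.toReal_ofReal hnn, hval]

theorem stmt13 {X : Type*} [MetricSpace X] [TopologicalSpace.SeparableSpace X] [CompleteSpace X]
    [MeasurableSpace X] [BorelSpace X]
    (μ ν : Measure X) [IsProbabilityMeasure μ] [IsProbabilityMeasure ν]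
    (hac : ν ≪ μ) (hH : relEnt ν μ ≠ ∞)
    (f : X → ℝ) (hfc : Continuous f) (M : ℝ) (hM : ∀ x, |f x| ≤ M)
    (hf0 : ∫ x, f x ∂ν = 0) :
    HasDerivAt
      (fun ε : ℝ =>
        (relEnt (ν.withDensity fun x => ENNReal.ofReal (1 + ε * f x)) μ).toReal)
      (∫ x, Real.log ((ν.rnDeriv μ x).toReal) * f x ∂ν) 0 := by
  classical
  have hfm : Measurable f := hfc.measurable
  set M' : ℝ := |M| + 1 with hM'def
  have hM'pos : 0 < M' := by positivity
  have hM' : ∀ x, |f x| ≤ M' := fun x => (hM x).trans (by rw [hM'def]; linarith [le_abs_self M])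
  have hf_int : Integrable f ν :=
    (integrable_const M').mono' hfm.aestronglyMeasurable (ae_of_all _ fun x => by
      simpa using hM' x)
  have hllr_int : Integrable (llr ν μ) ν := by
    by_contra hcon
    exact hH (by rw [relEnt, if_neg (fun h => hcon h.2)])
  set δ : ℝ := (2 * M')⁻¹ with hδ
  have hδpos : 0 < δ := by positivity
  have hb : ∀ ε : ℝ, |ε| < δ → ∀ x, |ε * f x| ≤ 1/2 := by
    intro ε hε x
    rw [abs_mul]
    calc |ε| * |f x| ≤ δ * M' := by
          apply mul_le_mul hε.le (hM' x) (abs_nonneg _) hδpos.le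
      _ = 1/2 := by rw [hδ]; field_simp
  have hA := aux_deriv ν f hfm M' hM'pos hM' hf0
  have hgoal : HasDerivAt
      (fun ε : ℝ => (∫ x, (1 + ε * f x) * Real.log (1 + ε * f x) ∂ν)
        + ((∫ x, llr ν μ x ∂ν) + ε * ∫ x, llr ν μ x * f x ∂ν))
      (∫ x, llr ν μ x * f x ∂ν) 0 := by
    have hlin : HasDerivAt (fun ε : ℝ => ε * ∫ x, llr ν μ x * f x ∂ν)
        (∫ x, llr ν μ x * f x ∂ν) 0 := by
      simpa using (hasDerivAt_id (0:ℝ)).mul_const (∫ x, llr ν μ x * f x ∂ν)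
    have h := hA.add (hlin.const_add (∫ x, llr ν μ x ∂ν)); rw [zero_add] at h; exact h
  have heq : (fun ε : ℝ =>
        (relEnt (ν.withDensity fun x => ENNReal.ofReal (1 + ε * f x)) μ).toReal)
      =ᶠ[𝓝 0] (fun ε : ℝ => (∫ x, (1 + ε * f x) * Real.log (1 + ε * f x) ∂ν)
        + ((∫ x, llr ν μ x ∂ν) + ε * ∫ x, llr ν μ x * f x ∂ν)) := by
    filter_upwards [Metric.ball_mem_nhds (0:ℝ) hδpos] with ε hε
    exact aux_key μ ν hac hllr_int f hfm hf_int hf0 M' hM' ε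
      (hb ε (by simpa [Real.dist_eq] using hε))
  exact hgoal.congr_of_eventuallyEq heq

end
end
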